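/- Let n ≥ 3 and let (x_1,…,x_n, x_0, x̄_n,…,x̄_1) be nonnegative integers with x_0 ∈ {0,1} and x_0 + Σ (x_i + x̄_i) = l. First form the primed tuple x'_1 = (x_1 − x̄_1)_+, x'_i = (x_i − x̄_i)_+ + min(x_{i−1}, x̄_{i−1}) (2 ≤ i ≤ n), x'_0 = x_0 + 2·min(x_n, x̄_n), x̄'_i = (x̄_i − x_i)_+ + min(x_{i−1}, x̄_{i−1}) (2 ≤ i ≤ n), x̄'_1 = (x̄_1 − x_1)_+. Then applying the inverse formulas to (x'_1,…,x'_n, x'_0, x̄'_n,…,x̄'_1) — namely y_1 = x'_1 + min(x'_2, x̄'_2); y_i = (x'_i − x̄'_i)_+ + min(x'_{i+1}, x̄'_{i+1}) for 2 ≤ i ≤ n−1; y_n = (x'_n − x̄'_n)_+ + ⌊x'_0/2⌋; y_0 = x'_0 − 2⌊x'_0/2⌋; ȳ_n = (x̄'_n − x'_n)_+ + ⌊x'_0/2⌋; ȳ_i = (x̄'_i − x'_i)_+ + min(x'_{i+1}, x̄'_{i+1}) for 2 ≤ i ≤ n−1; ȳ_1 = x̄'_1 + min(x'_2, x̄'_2)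 — recovers the original tuple: y_i = x_i, ȳ_i = x̄_i for all 1 ≤ i ≤ n, and y_0 = x_0. (That is, φ ∘ ψ = id for type B_n^{(1)}.) -/
import Mathlib


def xprime (x xb : ℕ → ℕ) (i : ℕ) : ℕ :=
  if i = 1 then x 1 - xb 1 else (x i - xb i) + min (x (i - 1)) (xb (i - 1))

def xbprime (x xb : ℕ → ℕ) (i : ℕ) : ℕ :=
  if i = 1 then xb 1 - x 1 else (xb i - x i) + min (x (i - 1)) (xb (i - 1))

def x0prime (n : ℕ) (x xb : ℕ → ℕ) (x0 : ℕ) : ℕ := x0 + 2 * min (x n) (xb n)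

def phiMapX (n : ℕ) (y yb : ℕ → ℕ) (y0 : ℕ) (i : ℕ) : ℕ :=
  if i = 1 then y 1 + min (y 2) (yb 2)
  else if i = n then (y n - yb n) + y0 / 2
  else (y i - yb i) + min (y (i + 1)) (yb (i + 1))

def phiMapXb (n : ℕ) (y yb : ℕ → ℕ) (y0 : ℕ) (i : ℕ) : ℕ :=
  if i = 1 then yb 1 + min (y 2) (yb 2)
  else if i = n then (yb n - y n) + y0 / 2
  else (yb i - y i) + min (y (i + 1)) (yb (i + 1))

def phiMapX0 (y0 : ℕ) : ℕ := y0 - 2 * (y0 / 2)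

theorem stmt_13 (n l : ℕ) (hn : 3 ≤ n)
    (x xb : ℕ → ℕ) (x0 : ℕ) (hx0 : x0 ≤ 1)
    (hsum : x0 + ∑ i ∈ Finset.Icc 1 n, (x i + xb i) = l) :
    (∀ i, 1 ≤ i → i ≤ n →
      phiMapX n (xprime x xb) (xbprime x xb) (x0prime n x xb x0) i = x i ∧
      phiMapXb n (xprime x xb) (xbprime x xb) (x0prime n x xb x0) i = xb i) ∧
    phiMapX0 (x0prime n x xb x0) = x0 := by
  have hd : x0prime n x xb x0 / 2 = min (x n) (xb n) := by
    simp only [x0prime]; omega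
  constructor
  · intro i h1 hin
    rcases eq_or_ne i 1 with rfl | hi1
    · simp only [phiMapX, phiMapXb, xprime, xbprime]
      norm_num
      omega
    · rcases eq_or_ne i n with rfl | hin'
      · simp only [phiMapX, phiMapXb, xprime, xbprime]
        split_ifs <;> omega
      · have hip : i + 1 ≠ 1 := by omega
        simp only [phiMapX, phiMapXb, xprime, xbprime, if_neg hi1, if_neg hin',
          if_neg hip, Nat.add_sub_cancel]
        omega
  · simp only [phiMapX0, x0prime]
    omega
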